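/- Let μ be a finite measure of total mass m > 0 and K : X → (0,∞) with K, K·ln K, and all K^{1-1/2^p} integrable, and set V° := (1/m')∫K dμ where m' = ∫ K dμ. Then lim_{p→∞} ( (∫ K^{(2^p-1)/2^p} dμ) / (∫ K dμ) )^{2^p} = exp( -(1/∫K dμ) ∫ K ln K dμ ). -/

import Mathlib

open MeasureTheory Filter

lemma PW_exp_sub_one_le (u : ℝ) : Real.exp u - 1 ≤ u * Real.exp u := by
  have h2 : 1 - u ≤ Real.exp (-u) := by
    have := Real.add_one_le_exp (-u); linarith
  have h3 : Real.exp (-u) * Real.exp u = 1 := by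
    rw [← Real.exp_add]; simp
  nlinarith [Real.exp_pos u]

lemma PW_bound (a ε : ℝ) (ha : 0 < a) (hε : 0 < ε) (hε2 : ε ≤ 1/2) :
    |(a ^ (1 - ε) - a) / ε| ≤ |a * Real.log a| + 2 := by
  rcases le_or_gt 1 a with h1 | h1
  · have hlog : 0 ≤ Real.log a := Real.log_nonneg h1
    have hle : a ^ (1 - ε) ≤ a := by
      calc a ^ (1-ε) ≤ a ^ (1:ℝ) := Real.rpow_le_rpow_of_exponent_le h1 (by linarith)
        _ = a := Real.rpow_one a
    have key : a - a ^ (1 - ε) ≤ ε * (a * Real.log a) := by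
      have hrw : a ^ (1 - ε) = a * Real.exp (-(ε * Real.log a)) := by
        rw [Real.rpow_def_of_pos ha, ← Real.exp_log ha, Real.log_exp, ← Real.exp_add]
        ring_nf
      rw [hrw]
      have h2 : 1 - ε * Real.log a ≤ Real.exp (-(ε * Real.log a)) := by
        have := Real.add_one_le_exp (-(ε * Real.log a)); linarith
      nlinarith [ha.le]
    rw [abs_div, abs_of_pos hε, div_le_iff₀ hε]
    rw [abs_sub_comm, abs_of_nonneg (by linarith)]
    have : |a * Real.log a| = a * Real.log a := abs_of_nonneg (by positivity)
    nlinarith [hε.le]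
  · have hloga : Real.log a ≤ 0 := Real.log_nonpos ha.le h1.le
    set b := -Real.log a with hb
    have hbnn : 0 ≤ b := by simp [hb]; linarith
    have hge : a ≤ a ^ (1 - ε) := by
      calc a = a ^ (1:ℝ) := (Real.rpow_one a).symm
        _ ≤ a ^ (1-ε) := Real.rpow_le_rpow_of_exponent_ge ha h1.le (by linarith)
    have hrw : a ^ (1 - ε) = a * Real.exp (ε * b) := by
      rw [Real.rpow_def_of_pos ha, ← Real.exp_log ha, Real.log_exp, ← Real.exp_add]
      ring_nf
      rw [hb]; ring_nf
    have hexp := PW_exp_sub_one_le (ε * b)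
    have key : a ^ (1 - ε) - a ≤ ε * (b * a ^ (1 - ε)) := by
      rw [hrw]
      nlinarith [ha.le]
    have h12 : a ^ (1 - ε) ≤ a ^ ((1:ℝ)/2) :=
      Real.rpow_le_rpow_of_exponent_ge ha h1.le (by linarith)
    have hba : b * a ^ ((1:ℝ)/2) ≤ 2 := by
      have hlog2 : Real.log (a ^ (-(1:ℝ)/2)) ≤ a ^ (-(1:ℝ)/2) - 1 :=
        Real.log_le_sub_one_of_pos (Real.rpow_pos_of_pos ha _)
      rw [Real.log_rpow ha] at hlog2
      have hbb : b ≤ 2 * a ^ (-(1:ℝ)/2) := by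
        have heq : (-(1:ℝ)/2) * Real.log a = b/2 := by rw [hb]; ring
        rw [heq] at hlog2
        nlinarith [Real.rpow_pos_of_pos ha (-(1:ℝ)/2)]
      have hmul : a ^ (-(1:ℝ)/2) * a ^ ((1:ℝ)/2) = 1 := by
        rw [← Real.rpow_add ha]; norm_num
      nlinarith [Real.rpow_pos_of_pos ha ((1:ℝ)/2), Real.rpow_pos_of_pos ha (-(1:ℝ)/2)]
    rw [abs_div, abs_of_pos hε, div_le_iff₀ hε, abs_of_nonneg (by linarith)]
    have hfin : b * a ^ (1-ε) ≤ 2 := le_trans (mul_le_mul_of_nonneg_left h12 hbnn) hba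
    have : ε * (b * a ^ (1-ε)) ≤ ε * 2 := mul_le_mul_of_nonneg_left hfin hε.le
    nlinarith [abs_nonneg (a * Real.log a)]

lemma PW_ptwise (a : ℝ) (ha : 0 < a) :
    Tendsto (fun p : ℕ => (a ^ (1 - ((2:ℝ) ^ p)⁻¹) - a) * 2 ^ p) atTop
      (nhds (-(a * Real.log a))) := by
  have hφ : HasDerivAt (fun t : ℝ => a ^ (1 - t)) (-(a * Real.log a)) 0 := by
    have h1 : HasDerivAt (fun t : ℝ => a ^ t) (a ^ (1:ℝ) * Real.log a) (1:ℝ) :=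
      (Real.hasStrictDerivAt_const_rpow ha 1).hasDerivAt
    have h2 : HasDerivAt (fun t : ℝ => 1 - t) (-1 : ℝ) (0:ℝ) := by
      simpa using (hasDerivAt_id (0:ℝ)).const_sub (1:ℝ)
    have h3 := HasDerivAt.comp (𝕜 := ℝ) 0 (by simpa using h1) h2
    simpa [Real.rpow_one, Function.comp_def] using h3
  have hslope := hasDerivAt_iff_tendsto_slope.mp hφ
  have hε : Tendsto (fun p : ℕ => ((2:ℝ) ^ p)⁻¹) atTop (nhdsWithin 0 {(0:ℝ)}ᶜ) := by
    apply tendsto_nhdsWithin_of_tendsto_nhds_of_eventually_within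
    · exact tendsto_inv_atTop_zero.comp (tendsto_pow_atTop_atTop_of_one_lt one_lt_two)
    · filter_upwards with p
      simp only [Set.mem_compl_iff, Set.mem_singleton_iff]
      positivity
  have h4 := hslope.comp hε
  have heq : (fun p : ℕ => slope (fun t : ℝ => a ^ (1 - t)) 0 (((2:ℝ) ^ p)⁻¹))
      = fun p : ℕ => (a ^ (1 - ((2:ℝ) ^ p)⁻¹) - a) * 2 ^ p := by
    funext p
    rw [slope_def_field]
    have h2p : ((2:ℝ) ^ p) ≠ 0 := by positivity
    field_simp [Real.rpow_one]
    simp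
  simpa [Function.comp_def, heq] using h4

noncomputable def PW_hfun (u : ℝ) : ℝ := if u = 0 then 1 else Real.log (1 + u) / u

lemma PW_hfun_tendsto : Tendsto PW_hfun (nhds 0) (nhds 1) := by
  have hφ : HasDerivAt (fun u : ℝ => Real.log (1 + u)) 1 0 := by
    have h1 : HasDerivAt Real.log (1:ℝ)⁻¹ (1:ℝ) := Real.hasDerivAt_log one_ne_zero
    have h2 : HasDerivAt (fun u : ℝ => 1 + u) 1 0 := by
      simpa using (hasDerivAt_id (0:ℝ)).const_add (1:ℝ)
    have h3 := HasDerivAt.comp (𝕜 := ℝ) 0 (by simpa using h1) h2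
    simpa [Function.comp_def] using h3
  have hslope := hasDerivAt_iff_tendsto_slope.mp hφ
  rw [← nhdsNE_sup_pure (0:ℝ), tendsto_sup]
  constructor
  · apply hslope.congr'
    filter_upwards [self_mem_nhdsWithin] with u hu
    simp only [Set.mem_compl_iff, Set.mem_singleton_iff] at hu
    rw [slope_def_field, PW_hfun, if_neg hu]
    simp [div_eq_div_iff]
  · have h0 : PW_hfun 0 = 1 := if_pos rfl
    simpa [h0] using tendsto_pure_nhds PW_hfun 0

/-- Abstract form of the alternative definition of the Paouris–Werner invariant:
`lim_{p→∞} ((∫ K^{(2^p-1)/2^p} dμ)/(∫ K dμ))^{2^p} = exp(-(1/∫K dμ) ∫ K ln K dμ)`. -/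
theorem stmt4 {X : Type*} [MeasurableSpace X] (μ : Measure X) [IsFiniteMeasure μ]
    (hm : 0 < (μ Set.univ).toReal)
    (K : X → ℝ) (hKpos : ∀ x, 0 < K x) (hKmeas : Measurable K)
    (hKint : Integrable K μ)
    (hKlog : Integrable (fun x => K x * Real.log (K x)) μ)
    (hKp : ∀ p : ℕ, Integrable (fun x => K x ^ ((2 ^ p - 1) / 2 ^ p : ℝ)) μ) :
    Tendsto
      (fun p : ℕ =>
        ((∫ x, K x ^ ((2 ^ p - 1) / 2 ^ p : ℝ) ∂μ) / ∫ x, K x ∂μ) ^ ((2 : ℝ) ^ p))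
      atTop
      (nhds (Real.exp (-(1 / ∫ x, K x ∂μ) * ∫ x, K x * Real.log (K x) ∂μ))) := by
  have hexp_eq : ∀ p : ℕ, ((2 ^ p - 1) / 2 ^ p : ℝ) = 1 - ((2:ℝ) ^ p)⁻¹ := by
    intro p
    have h2p : ((2:ℝ) ^ p) ≠ 0 := by positivity
    field_simp
  have hμuniv : 0 < μ Set.univ := by
    rcases eq_or_lt_of_le (zero_le : 0 ≤ μ Set.univ) with h | h
    · rw [← h] at hm; simp at hm
    · exact h
  set I := ∫ x, K x ∂μ with hI
  set L := ∫ x, K x * Real.log (K x) ∂μ with hL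
  set F : ℕ → ℝ := fun p => ∫ x, K x ^ (1 - ((2:ℝ) ^ p)⁻¹) ∂μ with hF
  have hKp' : ∀ p : ℕ, Integrable (fun x => K x ^ (1 - ((2:ℝ) ^ p)⁻¹)) μ := by
    intro p
    have := hKp p
    rwa [hexp_eq p] at this
  have hIpos : 0 < I := by
    rw [hI, integral_pos_iff_support_of_nonneg (fun x => (hKpos x).le) hKint]
    have hsupp : Function.support K = Set.univ := by
      ext x; simp [Function.mem_support, (hKpos x).ne']
    rwa [hsupp]
  have hFpos : ∀ p, 0 < F p := by
    intro p
    rw [hF]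
    rw [integral_pos_iff_support_of_nonneg
      (fun x => (Real.rpow_pos_of_pos (hKpos x) _).le) (hKp' p)]
    have hsupp : Function.support (fun x => K x ^ (1 - ((2:ℝ) ^ p)⁻¹)) = Set.univ := by
      ext x; simp [Function.mem_support, (Real.rpow_pos_of_pos (hKpos x) (1 - ((2:ℝ) ^ p)⁻¹)).ne']
    rwa [hsupp]
  -- key difference-quotient limit
  have hD : Tendsto (fun p : ℕ => (F p - I) * 2 ^ p) atTop (nhds (-L)) := by
    have hmain : Tendsto
        (fun p : ℕ => ∫ x, (K x ^ (1 - ((2:ℝ) ^ p)⁻¹) - K x) * 2 ^ p ∂μ) atTop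
        (nhds (∫ x, -(K x * Real.log (K x)) ∂μ)) := by
      apply tendsto_integral_filter_of_dominated_convergence
        (fun x => |K x * Real.log (K x)| + 2)
      · filter_upwards with p
        have hc : (0:ℝ) ≤ 1 - ((2:ℝ) ^ p)⁻¹ := by
          have h1 : ((2:ℝ) ^ p)⁻¹ ≤ 1 := by
            rw [inv_le_one_iff₀]
            right; exact one_le_pow₀ one_le_two
          linarith
        exact ((((Real.continuous_rpow_const hc).measurable.comp hKmeas).sub
          hKmeas).mul_const _).aestronglyMeasurable
      · filter_upwards [eventually_ge_atTop 1] with p hp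
        filter_upwards with x
        have h2p : (0:ℝ) < 2 ^ p := by positivity
        have hεle : ((2:ℝ) ^ p)⁻¹ ≤ 1/2 := by
          rw [inv_le_comm₀ h2p (by norm_num)]
          norm_num
          calc (2:ℝ) = 2 ^ (1:ℕ) := (pow_one 2).symm
            _ ≤ 2 ^ p := pow_le_pow_right₀ one_le_two hp
        have hb := PW_bound (K x) (((2:ℝ) ^ p)⁻¹) (hKpos x) (by positivity) hεle
        have heq2 : (K x ^ (1 - ((2:ℝ) ^ p)⁻¹) - K x) / ((2:ℝ) ^ p)⁻¹
            = (K x ^ (1 - ((2:ℝ) ^ p)⁻¹) - K x) * 2 ^ p := by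
          field_simp
        rw [heq2] at hb
        simpa [Real.norm_eq_abs, abs_mul, abs_of_pos h2p] using hb
      · exact hKlog.abs.add (integrable_const 2)
      · filter_upwards with x
        exact PW_ptwise (K x) (hKpos x)
    have heq : (fun p : ℕ => ∫ x, (K x ^ (1 - ((2:ℝ) ^ p)⁻¹) - K x) * 2 ^ p ∂μ)
        = fun p : ℕ => (F p - I) * 2 ^ p := by
      funext p
      rw [integral_mul_const, integral_sub (hKp' p) hKint]
    have hneg : (∫ x, -(K x * Real.log (K x)) ∂μ) = -L := by
      rw [integral_neg]
    rwa [heq, hneg] at hmain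
  -- c_p → 0
  have hc0 : Tendsto (fun p : ℕ => (F p - I) / I) atTop (nhds 0) := by
    have h1 : Tendsto (fun p : ℕ => ((F p - I) * 2 ^ p) * ((2:ℝ) ^ p)⁻¹) atTop
        (nhds ((-L) * 0)) :=
      hD.mul (tendsto_inv_atTop_zero.comp (tendsto_pow_atTop_atTop_of_one_lt one_lt_two))
    have heq : (fun p : ℕ => ((F p - I) * 2 ^ p) * ((2:ℝ) ^ p)⁻¹)
        = fun p : ℕ => F p - I := by
      funext p
      have h2p : ((2:ℝ) ^ p) ≠ 0 := by positivity
      field_simp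
    rw [heq, mul_zero] at h1
    simpa using h1.div_const I
  have hd : Tendsto (fun p : ℕ => ((F p - I) * 2 ^ p) / I) atTop (nhds (-L / I)) :=
    hD.div_const I
  -- log limit
  have hlog : Tendsto (fun p : ℕ => (2:ℝ) ^ p * Real.log (F p / I)) atTop
      (nhds (-L / I)) := by
    have hprod : Tendsto (fun p : ℕ => ((F p - I) * 2 ^ p / I) * PW_hfun ((F p - I) / I))
        atTop (nhds ((-L / I) * 1)) :=
      hd.mul (PW_hfun_tendsto.comp hc0)
    rw [mul_one] at hprod
    apply hprod.congr
    intro p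
    have hIne : I ≠ 0 := hIpos.ne'
    have h1c : 1 + (F p - I) / I = F p / I := by field_simp; ring
    by_cases hc : (F p - I) / I = 0
    · have hFI : F p = I := by
        field_simp at hc
        linarith
      rw [hc, PW_hfun, if_pos rfl, hFI]
      simp [div_self hIne]
    · rw [PW_hfun, if_neg hc, ← h1c]
      have h2 : (F p - I) * 2 ^ p / I = 2 ^ p * ((F p - I) / I) := by ring
      rw [h2, mul_assoc, mul_comm ((F p - I) / I), div_mul_cancel₀ _ hc]
  -- assemble
  have hfinal := (Real.continuous_exp.tendsto _).comp hlog
  have heqfun : (fun p : ℕ => Real.exp ((2:ℝ) ^ p * Real.log (F p / I)))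
      = fun p : ℕ =>
        ((∫ x, K x ^ ((2 ^ p - 1) / 2 ^ p : ℝ) ∂μ) / I) ^ ((2 : ℝ) ^ p) := by
    funext p
    have hint : (∫ x, K x ^ ((2 ^ p - 1) / 2 ^ p : ℝ) ∂μ) = F p := by
      rw [hF]; simp only [hexp_eq p]
    rw [hint]
    have hpos : 0 < F p / I := div_pos (hFpos p) hIpos
    rw [Real.rpow_def_of_pos hpos, mul_comm]
  have hval : Real.exp (-L / I) = Real.exp (-(1 / I) * L) := by
    congr 1
    ring
  rw [← hval, ← heqfun]
  simpa [Function.comp_def] using hfinal
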